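/- For nonnegative integers m, h with 0 ≤ m < h, the higher order Bernoulli polynomials satisfy Σ_{k=0}^{h-1} C(h,k) (-1)^{h-1-k} B_m^{(k)}(kx/h) = B_m^{(h)}(x). -/

import Mathlib

open Finset PowerSeries

/-- The formal power series `(e^t - 1)/t`. -/
noncomputable def expD : PowerSeries ℂ :=
  PowerSeries.mk fun n => PowerSeries.coeff (n + 1) (PowerSeries.exp ℂ - 1)

/-- The higher order Bernoulli polynomial `B_m^{(w)}(x)`, defined by
`(t/(e^t-1))^w e^{xt} = ∑_{m≥0} B_m^{(w)}(x) t^m/m!`. -/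
noncomputable def hBernoulli (w : ℕ) (x : ℂ) (m : ℕ) : ℂ :=
  (Nat.factorial m : ℂ) *
    PowerSeries.coeff m (PowerSeries.rescale x (PowerSeries.exp ℂ) * expD⁻¹ ^ w)

lemma constantCoeff_expD : constantCoeff expD = 1 := by
  rw [← coeff_zero_eq_constantCoeff]
  simp [expD, coeff_exp]

lemma expD_mul_inv : expD * expD⁻¹ = 1 :=
  PowerSeries.mul_inv_cancel _ (by rw [constantCoeff_expD]; exact one_ne_zero)

lemma rescale_nat_mul (c : ℂ) (k : ℕ) :
    rescale ((k : ℂ) * c) (PowerSeries.exp ℂ) = (rescale c (PowerSeries.exp ℂ)) ^ k := by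
  induction k with
  | zero => simp [rescale_zero, PowerSeries.constantCoeff_exp]
  | succ n ih =>
    have hc : ((n + 1 : ℕ) : ℂ) * c = (n : ℂ) * c + c := by push_cast; ring
    rw [hc, ← exp_mul_exp_eq_exp_add, ih, pow_succ]

theorem hBernoulli_alternating_sum (m h : ℕ) (hmh : m < h) (x : ℂ) :
    ∑ k ∈ Finset.range h,
        (h.choose k : ℂ) * (-1) ^ (h - 1 - k) * hBernoulli k ((k : ℂ) * x / h) m
      = hBernoulli h x m := by
  have hh : (h : ℂ) ≠ 0 := Nat.cast_ne_zero.mpr (by omega)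
  set c : ℂ := x / h with hc
  set G : PowerSeries ℂ := rescale c (PowerSeries.exp ℂ) * expD⁻¹ with hG
  have hB : ∀ k : ℕ, hBernoulli k ((k : ℂ) * x / h) m
      = (Nat.factorial m : ℂ) * coeff m (G ^ k) := by
    intro k
    have h1 : (k : ℂ) * x / h = (k : ℂ) * c := by rw [hc]; ring
    rw [hBernoulli, h1, rescale_nat_mul, hG, mul_pow]
  have hBh : hBernoulli h x m = (Nat.factorial m : ℂ) * coeff m (G ^ h) := by
    have h1 : x = (h : ℂ) * c := by rw [hc]; field_simp
    calc hBernoulli h x m = hBernoulli h ((h : ℂ) * x / h) m := by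
          rw [mul_comm, mul_div_assoc, div_self hh, mul_one]
      _ = _ := hB h
  -- key: coeff m ((G - 1)^h) = 0
  have hkey : coeff m ((G - 1) ^ h) = 0 := by
    have hdvd : (X : PowerSeries ℂ) ∣ (rescale c (PowerSeries.exp ℂ) - expD) := by
      rw [X_dvd_iff, map_sub, ← coeff_zero_eq_constantCoeff, coeff_rescale]
      simp [constantCoeff_expD, coeff_exp]
    have hG1 : G - 1 = (rescale c (PowerSeries.exp ℂ) - expD) * expD⁻¹ := by
      rw [hG, ← expD_mul_inv]; ring
    rw [hG1, mul_pow]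
    have hXdvd : (X : PowerSeries ℂ) ^ h ∣
        (rescale c (PowerSeries.exp ℂ) - expD) ^ h * expD⁻¹ ^ h :=
      dvd_mul_of_dvd_left (pow_dvd_pow_of_dvd hdvd h) _
    exact (X_pow_dvd_iff.mp hXdvd) m hmh
  -- algebraic identity
  have hsum : ∑ k ∈ Finset.range h,
      ((h.choose k : ℂ) * (-1) ^ (h - 1 - k)) • G ^ k = G ^ h - (G - 1) ^ h := by
    have hadd : (G - 1) ^ h
        = ∑ k ∈ Finset.range (h + 1), G ^ k * (-1 : PowerSeries ℂ) ^ (h - k) * (h.choose k) := by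
      rw [sub_eq_add_neg]
      exact add_pow G (-1) h
    have hstep : ∀ k ∈ Finset.range h,
        ((h.choose k : ℂ) * (-1) ^ (h - 1 - k)) • G ^ k
          = -(G ^ k * (-1 : PowerSeries ℂ) ^ (h - k) * (h.choose k)) := by
      intro k hk
      have hk' : k < h := Finset.mem_range.mp hk
      have hsub : h - k = (h - 1 - k) + 1 := by omega
      rw [hsub, pow_succ]
      simp only [smul_eq_C_mul, map_mul, map_pow, map_neg, map_one, map_natCast]
      ring
    rw [Finset.sum_congr rfl hstep, hadd, Finset.sum_range_succ]
    simp only [Nat.sub_self, pow_zero, Nat.choose_self, Nat.cast_one, mul_one]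
    rw [Finset.sum_neg_distrib]
    ring
  -- conclude
  calc ∑ k ∈ Finset.range h,
        (h.choose k : ℂ) * (-1) ^ (h - 1 - k) * hBernoulli k ((k : ℂ) * x / h) m
      = (Nat.factorial m : ℂ) *
        coeff m (∑ k ∈ Finset.range h, ((h.choose k : ℂ) * (-1) ^ (h - 1 - k)) • G ^ k) := by
        rw [map_sum, Finset.mul_sum]
        refine Finset.sum_congr rfl fun k _ => ?_
        rw [hB k, map_smul, smul_eq_mul]
        ring
    _ = (Nat.factorial m : ℂ) * coeff m (G ^ h - (G - 1) ^ h) := by rw [hsum]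
    _ = hBernoulli h x m := by rw [map_sub, hkey, sub_zero, hBh]
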